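/- (The upper bounds λ_k ≤ 1 in the dual problem are without loss of generality.) Assume μ_i((−∞,0]) = 0 for all i ∈ I and m_k ≥ 0 for all k ∈ K. Let λ ∈ ℝ^K with λ ≥ 0 componentwise, and define λ' ∈ ℝ^K by λ'_k := min(λ_k, 1) for each k ∈ K. Then L*(λ') ≤ L*(λ). -/

import Mathlib

open MeasureTheory Finset

variable {I K : Type*}

/-- `fwin μ i a b = ∫ (a − t)·1_{(−∞,b]}(t) dμ_i(t)`: expected utility of bidding `b`
with valuation `a` in a second-price auction against highest competing bid with law `μ i`. -/
noncomputable def fwin (μ : I → Measure ℝ) (i : I) (a b : ℝ) : ℝ :=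
  ∫ t in Set.Iic b, (a - t) ∂(μ i)

/-- `rho μ i b = μ_i((−∞,b])`: the probability of winning the auction with bid `b`. -/
noncomputable def rho (μ : I → Measure ℝ) (i : I) (b : ℝ) : ℝ :=
  ((μ i) (Set.Iic b)).toReal

variable [Fintype I] [Fintype K] [DecidableEq I] [DecidableEq K]

/-- The allocation polytope `S`. -/
def alloc (E : Finset (I × K)) : Set ((I × K) → ℝ) :=
  {x | (∀ e ∈ E, 0 ≤ x e) ∧
    ∀ i : I, ∑ e ∈ E.filter (fun e => e.1 = i), x e ≤ 1}

/-- The profit objective `π(x,b)`. -/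
noncomputable def profit (E : Finset (I × K)) (μ : I → Measure ℝ) (s : I → ℝ)
    (r : I × K → ℝ) (x b : (I × K) → ℝ) : ℝ :=
  ∑ e ∈ E, s e.1 * x e * fwin μ e.1 (r e) (b e)

/-- Expected spend of campaign `k`: `Σ_{i ∈ I_k} r_ik · s_i · x_ik · ρ_i(b_ik)`. -/
noncomputable def spend (E : Finset (I × K)) (μ : I → Measure ℝ) (s : I → ℝ)
    (r : I × K → ℝ) (x b : (I × K) → ℝ) (k : K) : ℝ :=
  ∑ e ∈ E.filter (fun e => e.2 = k), r e * s e.1 * x e * rho μ e.1 (b e)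

/-- The Lagrangian `L(x,b,λ)`. -/
noncomputable def Lag (E : Finset (I × K)) (μ : I → Measure ℝ) (s : I → ℝ)
    (r : I × K → ℝ) (m : K → ℝ) (x b : (I × K) → ℝ) (lam : K → ℝ) : ℝ :=
  profit E μ s r x b + ∑ k : K, lam k * (m k - spend E μ s r x b k)

/-- The dual function `L*(λ) = sup {L(x,b,λ) : x ∈ S, b ≥ 0}`. -/
noncomputable def Lstar (E : Finset (I × K)) (μ : I → Measure ℝ) (s : I → ℝ)
    (r : I × K → ℝ) (m : K → ℝ) (lam : K → ℝ) : ℝ :=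
  sSup {v : ℝ | ∃ x b : (I × K) → ℝ,
    x ∈ alloc E ∧ (∀ e ∈ E, 0 ≤ b e) ∧ v = Lag E μ s r m x b lam}

/-- The upper bounds `λ_k ≤ 1` in the dual problem are without loss of generality: with
`m_k ≥ 0` and highest competing bids strictly positive almost surely, truncating any
`λ ≥ 0` componentwise at `1` can only improve (not increase) the dual function value:
`L*(min(λ, 1)) ≤ L*(λ)`. -/
theorem stmt_13 (E : Finset (I × K)) (μ : I → Measure ℝ)
    [∀ i, IsProbabilityMeasure (μ i)]
    (hμ : ∀ i, Integrable (fun t => t) (μ i))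
    (hμ0 : ∀ i, μ i (Set.Iic 0) = 0)
    (s : I → ℝ) (hs : ∀ i, 0 ≤ s i)
    (r : I × K → ℝ) (hr : ∀ e ∈ E, 0 ≤ r e)
    (m : K → ℝ) (hm : ∀ k, 0 ≤ m k)
    (lam : K → ℝ) (hlam : ∀ k, 0 ≤ lam k) :
    Lstar E μ s r m (fun k => min (lam k) 1) ≤ Lstar E μ s r m lam := by
  classical
  -- basic facts
  have hrho_nonneg : ∀ i b, 0 ≤ rho μ i b := fun i b => ENNReal.toReal_nonneg
  have hrho_le_one : ∀ i b, rho μ i b ≤ 1 := by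
    intro i b
    have h1 : μ i (Set.Iic b) ≤ 1 := prob_le_one
    calc rho μ i b ≤ (1 : ENNReal).toReal := ENNReal.toReal_mono ENNReal.one_ne_top h1
      _ = 1 := by simp
  have hint_nonneg : ∀ i b, 0 ≤ ∫ t in Set.Iic b, t ∂(μ i) := by
    intro i b
    refine integral_nonneg_of_ae (ae_restrict_of_ae ?_)
    rw [Filter.eventually_iff, mem_ae_iff]
    refine measure_mono_null (fun t ht => ?_) (hμ0 i)
    simp only [Set.mem_compl_iff, Set.mem_setOf_eq, not_le] at ht ⊢
    exact le_of_lt ht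
  have hfwin_le : ∀ i (a b : ℝ), fwin μ i a b ≤ a * rho μ i b := by
    intro i a b
    have hint : Integrable (fun t : ℝ => t) ((μ i).restrict (Set.Iic b)) := (hμ i).restrict
    have heq : fwin μ i a b = a * rho μ i b - ∫ t in Set.Iic b, t ∂(μ i) := by
      rw [fwin, integral_sub (integrable_const a) hint, setIntegral_const, rho,
        smul_eq_mul, mul_comm]
      rfl
    rw [heq]
    linarith [hint_nonneg i b]
  have hfwin_le' : ∀ e ∈ E, ∀ x : (I × K) → ℝ, x ∈ alloc E →
      ∀ b : ℝ, s e.1 * x e * fwin μ e.1 (r e) b ≤ r e * s e.1 * x e * rho μ e.1 b := by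
    intro e he x hx b
    have hsx : 0 ≤ s e.1 * x e := mul_nonneg (hs e.1) (hx.1 e he)
    calc s e.1 * x e * fwin μ e.1 (r e) b ≤ s e.1 * x e * (r e * rho μ e.1 b) :=
          mul_le_mul_of_nonneg_left (hfwin_le e.1 (r e) b) hsx
      _ = r e * s e.1 * x e * rho μ e.1 b := by ring
  have hx_le_one : ∀ x : (I × K) → ℝ, x ∈ alloc E → ∀ e ∈ E, x e ≤ 1 := by
    intro x hx e he
    refine le_trans ?_ (hx.2 e.1)
    refine Finset.single_le_sum (fun f hf => hx.1 f (Finset.mem_filter.mp hf).1) ?_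
    exact Finset.mem_filter.mpr ⟨he, rfl⟩
  have hspend_nonneg : ∀ x ∈ alloc E, ∀ b : (I × K) → ℝ, ∀ k : K,
      0 ≤ spend E μ s r x b k := by
    intro x hx b k
    refine Finset.sum_nonneg fun e he => ?_
    have heE : e ∈ E := (Finset.mem_filter.mp he).1
    exact mul_nonneg (mul_nonneg (mul_nonneg (hr e heE) (hs e.1)) (hx.1 e heE))
      (hrho_nonneg e.1 (b e))
  -- upper bound for the target set
  set C : ℝ := (∑ e ∈ E, s e.1 * r e) + ∑ k : K, lam k * m k with hC
  set S : Set ℝ := {v : ℝ | ∃ x b : (I × K) → ℝ,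
    x ∈ alloc E ∧ (∀ e ∈ E, 0 ≤ b e) ∧ v = Lag E μ s r m x b lam} with hSdef
  have hbdd : ∀ v ∈ S, v ≤ C := by
    rintro v ⟨x, b, hx, hb, rfl⟩
    have h1 : profit E μ s r x b ≤ ∑ e ∈ E, s e.1 * r e := by
      refine Finset.sum_le_sum fun e he => ?_
      calc s e.1 * x e * fwin μ e.1 (r e) (b e)
          ≤ r e * s e.1 * x e * rho μ e.1 (b e) := hfwin_le' e he x hx (b e)
        _ ≤ r e * s e.1 * 1 * 1 := by
            have hxl := hx_le_one x hx e he
            have hrl := hrho_le_one e.1 (b e)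
            have h1 : 0 ≤ r e * s e.1 := mul_nonneg (hr e he) (hs e.1)
            have h2 : 0 ≤ x e := hx.1 e he
            nlinarith [mul_le_mul_of_nonneg_left hrl (mul_nonneg h1 h2),
              mul_le_mul_of_nonneg_left hxl h1]
        _ = s e.1 * r e := by ring
    have h2 : ∑ k : K, lam k * (m k - spend E μ s r x b k) ≤ ∑ k : K, lam k * m k := by
      refine Finset.sum_le_sum fun k _ => ?_
      have := hspend_nonneg x hx b k
      nlinarith [hlam k]
    rw [Lag]; rw [hC]; linarith
  have hBdd : BddAbove S := ⟨C, hbdd⟩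
  -- nonemptiness and positivity of the target sup
  have h0mem : (∑ k : K, lam k * m k) ∈ S := by
    refine ⟨0, 0, ⟨fun e _ => le_refl 0, fun i => by simp⟩, fun e _ => le_refl 0, ?_⟩
    simp [Lag, profit, spend]
  have hLstar_nonneg : 0 ≤ Lstar E μ s r m lam := by
    have h1 : (0:ℝ) ≤ ∑ k : K, lam k * m k :=
      Finset.sum_nonneg fun k _ => mul_nonneg (hlam k) (hm k)
    exact le_trans h1 (le_csSup hBdd h0mem)
  -- main inequality
  refine Real.sSup_le ?_ hLstar_nonneg
  rintro v ⟨x, b, hx, hb, rfl⟩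
  set x' : (I × K) → ℝ := fun e => if lam e.2 ≤ 1 then x e else 0 with hx'
  have hx'mem : x' ∈ alloc E := by
    constructor
    · intro e he
      by_cases h : lam e.2 ≤ 1 <;> simp [hx', h, hx.1 e he]
    · intro i
      refine le_trans (Finset.sum_le_sum fun e he => ?_) (hx.2 i)
      by_cases h : lam e.2 ≤ 1 <;>
        simp [hx', h, hx.1 e (Finset.mem_filter.mp he).1]
  have hkey : Lag E μ s r m x b (fun k => min (lam k) 1) ≤ Lag E μ s r m x' b lam := by
    have hprofit : ∀ y : (I × K) → ℝ, profit E μ s r y b =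
        ∑ k : K, ∑ e ∈ E.filter (fun e => e.2 = k), s e.1 * y e * fwin μ e.1 (r e) (b e) := by
      intro y
      rw [profit, ← Finset.sum_fiberwise E (fun e => e.2)
        (fun e => s e.1 * y e * fwin μ e.1 (r e) (b e))]
    rw [Lag, Lag, hprofit x, hprofit x', ← Finset.sum_add_distrib, ← Finset.sum_add_distrib]
    refine Finset.sum_le_sum fun k _ => ?_
    by_cases hk : lam k ≤ 1
    · have hmin : min (lam k) 1 = lam k := min_eq_left hk
      have hxeq : ∀ e ∈ E.filter (fun e => e.2 = k), x' e = x e := by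
        intro e he
        have : e.2 = k := (Finset.mem_filter.mp he).2
        simp [hx', this, hk]
      have h1 : ∑ e ∈ E.filter (fun e => e.2 = k), s e.1 * x' e * fwin μ e.1 (r e) (b e)
          = ∑ e ∈ E.filter (fun e => e.2 = k), s e.1 * x e * fwin μ e.1 (r e) (b e) :=
        Finset.sum_congr rfl fun e he => by rw [hxeq e he]
      have h2 : spend E μ s r x' b k = spend E μ s r x b k := by
        rw [spend, spend]
        exact Finset.sum_congr rfl fun e he => by rw [hxeq e he]
      rw [hmin, h1, h2]
    · push_neg at hk
      have hmin : min (lam k) 1 = 1 := min_eq_right (le_of_lt hk)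
      have hx0 : ∀ e ∈ E.filter (fun e => e.2 = k), x' e = 0 := by
        intro e he
        have he2 : e.2 = k := (Finset.mem_filter.mp he).2
        simp [hx', he2, not_le.mpr hk]
      have h1 : ∑ e ∈ E.filter (fun e => e.2 = k), s e.1 * x' e * fwin μ e.1 (r e) (b e) = 0 :=
        Finset.sum_eq_zero fun e he => by rw [hx0 e he]; ring
      have h2 : spend E μ s r x' b k = 0 :=
        Finset.sum_eq_zero fun e he => by rw [hx0 e he]; ring
      have hPC : ∑ e ∈ E.filter (fun e => e.2 = k), s e.1 * x e * fwin μ e.1 (r e) (b e)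
          ≤ spend E μ s r x b k := by
        rw [spend]
        exact Finset.sum_le_sum fun e he =>
          hfwin_le' e (Finset.mem_filter.mp he).1 x hx (b e)
      rw [hmin, h1, h2]
      have hmk : m k ≤ lam k * m k := le_mul_of_one_le_left (hm k) (le_of_lt hk)
      linarith
  calc Lag E μ s r m x b (fun k => min (lam k) 1) ≤ Lag E μ s r m x' b lam := hkey
    _ ≤ Lstar E μ s r m lam := le_csSup hBdd ⟨x', b, hx'mem, hb, rfl⟩
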